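/- The matching polytope equals the set of fractional matchings: with E a finite set and σ₀, σ₁ permutations of E, the convex hull in ℝ^E of the indicator vectors of the perfect matchings of (E, σ₀, σ₁) is exactly the set of functions θ : E → ℝ with θ(e) ≥ 0 for all e ∈ E such that for every cycle C of σ₀ and every cycle C of σ₁ one has Σ_{e∈C} θ(e) = 1. -/

import Mathlib

open Finset

variable {E : Type*}

/-- A perfect matching of `(E, σ₀, σ₁)`: a `{0,1}`-valued function on `E` such that every
cycle (orbit) of `σ₀` and every cycle of `σ₁` contains exactly one element with value `1`. -/
def IsPerfectMatching (σ₀ σ₁ : Equiv.Perm E) (m : E → ℝ) : Prop :=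
  (∀ e, m e = 0 ∨ m e = 1) ∧
  (∀ e, ∃! e', σ₀.SameCycle e e' ∧ m e' = 1) ∧
  (∀ e, ∃! e', σ₁.SameCycle e e' ∧ m e' = 1)

section AuxPM
variable [Fintype E] [DecidableEq E]

private instance pmDecEq (σ : Equiv.Perm E) :
    DecidableEq (Quotient (Equiv.Perm.SameCycle.setoid σ)) :=
  fun a b => Quotient.recOnSubsingleton₂ a b fun x y =>
    decidable_of_iff (σ.SameCycle x y)
      ⟨fun h => Quotient.sound h, fun h => Quotient.exact h⟩

private instance pmFintype (σ : Equiv.Perm E) :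
    Fintype (Quotient (Equiv.Perm.SameCycle.setoid σ)) :=
  @Quotient.fintype E _ (Equiv.Perm.SameCycle.setoid σ)
    (fun x y => decidable_of_iff (σ.SameCycle x y) Iff.rfl)

/-- Sum of a fractional matching over a quotient class equals 1. -/
private lemma pm_sum_class (σ : Equiv.Perm E) (θ : E → ℝ)
    (h : ∀ e : E, ∑ e' ∈ univ.filter (fun e' => σ.SameCycle e e'), θ e' = 1)
    (c : Quotient (Equiv.Perm.SameCycle.setoid σ)) :
    ∑ e ∈ univ.filter (fun e => Quotient.mk (Equiv.Perm.SameCycle.setoid σ) e = c), θ e = 1 := by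
  obtain ⟨e₀, rfl⟩ := Quotient.exists_rep c
  rw [← h e₀]
  congr 1
  ext e
  simp only [mem_filter, mem_univ, true_and]
  exact ⟨fun hh => (Quotient.exact hh).symm, fun hh => Quotient.sound hh.symm⟩

/-- Total sum of a fractional matching equals the number of cycles. -/
private lemma pm_sum_total (σ : Equiv.Perm E) (θ : E → ℝ)
    (h : ∀ e : E, ∑ e' ∈ univ.filter (fun e' => σ.SameCycle e e'), θ e' = 1) :
    ∑ e, θ e = (Fintype.card (Quotient (Equiv.Perm.SameCycle.setoid σ)) : ℝ) := by
  rw [← Finset.sum_fiberwise_of_maps_to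
    (g := Quotient.mk (Equiv.Perm.SameCycle.setoid σ)) (fun x _ => mem_univ _) θ,
    Finset.sum_congr rfl (fun c _ => pm_sum_class σ θ h c)]
  simp [Finset.card_univ]

/-- The sum of a perfect matching over any cycle equals 1. -/
private lemma pm_matching_cycle_sum (σ : Equiv.Perm E) (m : E → ℝ)
    (h01 : ∀ e, m e = 0 ∨ m e = 1)
    (h : ∀ e, ∃! e', σ.SameCycle e e' ∧ m e' = 1) (e : E) :
    ∑ e' ∈ univ.filter (fun e' => σ.SameCycle e e'), m e' = 1 := by
  obtain ⟨e₀, ⟨hc, hm⟩, huniq⟩ := h e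
  rw [Finset.sum_eq_single_of_mem e₀ (by simp [hc])]
  · exact hm
  · intro b hb hne
    rcases h01 b with h0 | h1
    · exact h0
    · exact absurd (huniq b ⟨(mem_filter.mp hb).2, h1⟩) hne

/-- Existence of a perfect matching inside the support of a fractional matching. -/
private lemma pm_exists_matching (σ₀ σ₁ : Equiv.Perm E) (θ : E → ℝ)
    (h0 : ∀ e, 0 ≤ θ e)
    (h1 : ∀ e : E, ∑ e' ∈ univ.filter (fun e' => σ₀.SameCycle e e'), θ e' = 1)
    (h2 : ∀ e : E, ∑ e' ∈ univ.filter (fun e' => σ₁.SameCycle e e'), θ e' = 1) :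
    ∃ m : E → ℝ, IsPerfectMatching σ₀ σ₁ m ∧ ∀ e, m e = 1 → θ e ≠ 0 := by
  set Q₀ := Quotient (Equiv.Perm.SameCycle.setoid σ₀) with hQ₀
  set Q₁ := Quotient (Equiv.Perm.SameCycle.setoid σ₁) with hQ₁
  set mk₀ : E → Q₀ := Quotient.mk (Equiv.Perm.SameCycle.setoid σ₀) with hmk₀
  set mk₁ : E → Q₁ := Quotient.mk (Equiv.Perm.SameCycle.setoid σ₁) with hmk₁
  have hmk₀eq : ∀ {a b : E}, σ₀.SameCycle a b → mk₀ a = mk₀ b :=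
    fun h => Quotient.sound h
  have hmk₀ex : ∀ {a b : E}, mk₀ a = mk₀ b → σ₀.SameCycle a b :=
    fun h => Quotient.exact h
  have hmk₁eq : ∀ {a b : E}, σ₁.SameCycle a b → mk₁ a = mk₁ b :=
    fun h => Quotient.sound h
  have hmk₁ex : ∀ {a b : E}, mk₁ a = mk₁ b → σ₁.SameCycle a b :=
    fun h => Quotient.exact h
  have hcls₀ : ∀ c : Q₀, ∑ e ∈ univ.filter (fun e => mk₀ e = c), θ e = 1 :=
    pm_sum_class σ₀ θ h1
  have hcls₁ : ∀ c : Q₁, ∑ e ∈ univ.filter (fun e => mk₁ e = c), θ e = 1 :=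
    pm_sum_class σ₁ θ h2
  set t : Q₀ → Finset Q₁ :=
    fun c => (univ.filter fun e => mk₀ e = c ∧ θ e ≠ 0).image mk₁ with ht
  -- Hall condition
  have hall : ∀ s : Finset Q₀, #s ≤ #(s.biUnion t) := by
    intro s
    have key : (#s : ℝ) ≤ (#(s.biUnion t) : ℝ) := by
      have l1 : (#s : ℝ) = ∑ e ∈ univ.filter (fun e => mk₀ e ∈ s ∧ θ e ≠ 0), θ e := by
        calc (#s : ℝ) = ∑ c ∈ s, (1 : ℝ) := by simp
          _ = ∑ c ∈ s, ∑ e ∈ (univ.filter (fun e => mk₀ e ∈ s ∧ θ e ≠ 0)).filter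
                (fun x => mk₀ x = c), θ e := by
              refine Finset.sum_congr rfl (fun c hc => ?_)
              have hset : (univ.filter (fun e => mk₀ e ∈ s ∧ θ e ≠ 0)).filter (fun x => mk₀ x = c)
                  = univ.filter (fun e => mk₀ e = c ∧ θ e ≠ 0) := by
                ext e
                simp only [mem_filter, mem_univ, true_and]
                exact ⟨fun ⟨⟨_, h2'⟩, h3⟩ => ⟨h3, h2'⟩, fun ⟨h3, h2'⟩ => ⟨⟨h3 ▸ hc, h2'⟩, h3⟩⟩
              rw [hset]
              have hz : ∑ e ∈ univ.filter (fun e => mk₀ e = c ∧ θ e ≠ 0), θ e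
                  = ∑ e ∈ univ.filter (fun e => mk₀ e = c), θ e := by
                apply Finset.sum_subset
                · intro e he; simp only [mem_filter, mem_univ, true_and] at he ⊢; exact he.1
                · intro e he hne
                  simp only [mem_filter, mem_univ, true_and, not_and, not_not] at he hne
                  exact hne he
              rw [hz, hcls₀ c]
          _ = ∑ e ∈ univ.filter (fun e => mk₀ e ∈ s ∧ θ e ≠ 0), θ e :=
              Finset.sum_fiberwise_of_maps_to (fun x hx => (mem_filter.mp hx).2.1) θ
      have l2 : ∑ e ∈ univ.filter (fun e => mk₀ e ∈ s ∧ θ e ≠ 0), θ e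
          ≤ ∑ e ∈ univ.filter (fun e => mk₁ e ∈ s.biUnion t), θ e := by
        apply Finset.sum_le_sum_of_subset_of_nonneg
        · intro e he
          simp only [mem_filter, mem_univ, true_and] at he ⊢
          exact mem_biUnion.mpr ⟨mk₀ e, he.1, mem_image.mpr ⟨e, by simp [he.2], rfl⟩⟩
        · intro e _ _; exact h0 e
      have l3 : ∑ e ∈ univ.filter (fun e => mk₁ e ∈ s.biUnion t), θ e
          = (#(s.biUnion t) : ℝ) := by
        calc ∑ e ∈ univ.filter (fun e => mk₁ e ∈ s.biUnion t), θ e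
            = ∑ d ∈ s.biUnion t, ∑ e ∈ (univ.filter (fun e => mk₁ e ∈ s.biUnion t)).filter
                (fun x => mk₁ x = d), θ e :=
              (Finset.sum_fiberwise_of_maps_to (fun x hx => (mem_filter.mp hx).2) θ).symm
          _ = ∑ d ∈ s.biUnion t, (1 : ℝ) := by
              refine Finset.sum_congr rfl (fun d hd => ?_)
              have hset : (univ.filter (fun e => mk₁ e ∈ s.biUnion t)).filter (fun x => mk₁ x = d)
                  = univ.filter (fun e => mk₁ e = d) := by
                ext e
                simp only [mem_filter, mem_univ, true_and]
                exact ⟨fun ⟨_, h3⟩ => h3, fun h3 => ⟨h3 ▸ hd, h3⟩⟩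
              rw [hset, hcls₁ d]
          _ = (#(s.biUnion t) : ℝ) := by simp
      calc (#s : ℝ) = _ := l1
        _ ≤ _ := l2
        _ = _ := l3
    exact_mod_cast key
  obtain ⟨f, hfinj, hft⟩ := (Finset.all_card_le_biUnion_card_iff_exists_injective t).mp hall
  -- equal number of cycles
  have hcard : Fintype.card Q₀ = Fintype.card Q₁ := by
    have : (Fintype.card Q₀ : ℝ) = (Fintype.card Q₁ : ℝ) := by
      rw [← pm_sum_total σ₀ θ h1, ← pm_sum_total σ₁ θ h2]
    exact_mod_cast this
  have hfbij : Function.Bijective f :=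
    (Fintype.bijective_iff_injective_and_card f).mpr ⟨hfinj, hcard⟩
  -- choose representatives
  have hrep : ∀ c : Q₀, ∃ e : E, (mk₀ e = c ∧ θ e ≠ 0) ∧ mk₁ e = f c := by
    intro c
    obtain ⟨e, he, hme⟩ := mem_image.mp (hft c)
    exact ⟨e, (mem_filter.mp he).2, hme⟩
  choose g hg1 hg2 using hrep
  have hg0 : ∀ c, mk₀ (g c) = c := fun c => (hg1 c).1
  have hgθ : ∀ c, θ (g c) ≠ 0 := fun c => (hg1 c).2
  refine ⟨fun e => if g (mk₀ e) = e then 1 else 0, ⟨?_, ?_, ?_⟩, ?_⟩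
  · intro e
    by_cases h : g (mk₀ e) = e <;> simp [h]
  · intro e
    refine ⟨g (mk₀ e), ⟨(hmk₀ex (hg0 (mk₀ e))).symm, by simp [hg0]⟩, ?_⟩
    rintro e' ⟨hsc, hm'⟩
    by_cases h : g (mk₀ e') = e'
    · rw [← h, hmk₀eq hsc.symm]
    · simp [h] at hm'
  · intro e
    obtain ⟨c, hc⟩ := hfbij.2 (mk₁ e)
    refine ⟨g c, ⟨?_, by simp [hg0]⟩, ?_⟩
    · exact (hmk₁ex (by rw [hg2 c, hc])).symm
    · rintro e' ⟨hsc, hm'⟩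
      by_cases h : g (mk₀ e') = e'
      · have h1' : f (mk₀ e') = mk₁ e := by
          rw [← hg2 (mk₀ e'), h, ← hmk₁eq hsc]
        have hce : mk₀ e' = c := hfinj (by rw [h1', hc])
        rw [← h, hce]
      · simp [h] at hm'
  · intro e hm
    by_cases h : g (mk₀ e) = e
    · rw [← h]; exact hgθ (mk₀ e)
    · simp [h] at hm
/-- Every fractional matching is in the convex hull of perfect matchings, by strong
induction on the size of the support. -/
private lemma pm_mem_hull (σ₀ σ₁ : Equiv.Perm E) :
    ∀ n : ℕ, ∀ θ : E → ℝ, (∀ e, 0 ≤ θ e) →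
    (∀ e : E, ∑ e' ∈ univ.filter (fun e' => σ₀.SameCycle e e'), θ e' = 1) →
    (∀ e : E, ∑ e' ∈ univ.filter (fun e' => σ₁.SameCycle e e'), θ e' = 1) →
    #(univ.filter fun e => θ e ≠ 0) ≤ n →
    θ ∈ convexHull ℝ {m : E → ℝ | IsPerfectMatching σ₀ σ₁ m} := by
  intro n
  induction n with
  | zero =>
    intro θ h0 h1 h2 hcard
    rcases isEmpty_or_nonempty E with hE | hE
    · exact subset_convexHull ℝ _ ⟨fun e => isEmptyElim e, fun e => isEmptyElim e,
        fun e => isEmptyElim e⟩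
    · exfalso
      have hθ0 : ∀ e, θ e = 0 := by
        intro e
        by_contra h
        have : e ∈ univ.filter fun e => θ e ≠ 0 := by simp [h]
        have := Finset.card_pos.mpr ⟨e, this⟩
        omega
      have := h1 (Classical.arbitrary E)
      rw [Finset.sum_congr rfl (fun x _ => hθ0 x), Finset.sum_const_zero] at this
      norm_num at this
  | succ n ih =>
    intro θ h0 h1 h2 hcard
    rcases isEmpty_or_nonempty E with hE | hE
    · exact subset_convexHull ℝ _ ⟨fun e => isEmptyElim e, fun e => isEmptyElim e,
        fun e => isEmptyElim e⟩
    obtain ⟨m, hm, hsupp⟩ := pm_exists_matching σ₀ σ₁ θ h0 h1 h2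
    obtain ⟨h01, hm1, hm2⟩ := hm
    set S : Finset E := univ.filter (fun e => m e = 1) with hS
    have hSne : S.Nonempty := by
      obtain ⟨e', ⟨_, he'⟩, -⟩ := hm1 (Classical.arbitrary E)
      exact ⟨e', by simp [hS, he']⟩
    set tm : ℝ := S.inf' hSne θ with htm
    obtain ⟨estar, hestar, hestarval⟩ := Finset.exists_mem_eq_inf' hSne θ
    rw [← htm] at hestarval
    have hestar1 : m estar = 1 := (mem_filter.mp hestar).2
    have htpos : 0 < tm := by
      rcases lt_or_eq_of_le (h0 estar) with h | h
      · rw [hestarval]; exact h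
      · exact absurd h.symm (hsupp estar hestar1)
    -- any matched value of θ is ≤ 1
    have hle1 : ∀ e, θ e ≤ 1 := by
      intro e
      rw [← h1 e]
      apply Finset.single_le_sum (fun i _ => h0 i)
      simp [Equiv.Perm.SameCycle.refl]
    have htle1 : tm ≤ 1 := by
      rw [hestarval]; exact hle1 estar
    have hmem_ge : ∀ e, m e = 1 → tm ≤ θ e := by
      intro e he; exact Finset.inf'_le θ (by simp [hS, he])
    rcases eq_or_lt_of_le htle1 with heq | hlt
    · -- tm = 1 : θ = m
      have hθm : θ = m := by
        have hmatched : ∀ e, m e = 1 → θ e = 1 :=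
          fun e he => le_antisymm (hle1 e) (heq ▸ hmem_ge e he)
        funext e
        rcases h01 e with he0 | he1
        · -- θ e = 0 : e is in the cycle of its matched element
          obtain ⟨e', ⟨hsc, he'⟩, -⟩ := hm1 e
          have hecyc : e ∈ univ.filter (fun x => σ₀.SameCycle e x) := by
            simp [Equiv.Perm.SameCycle.refl]
          have he'cyc : e' ∈ univ.filter (fun x => σ₀.SameCycle e x) := by simp [hsc]
          have hsum := h1 e
          have hrest : ∑ x ∈ (univ.filter (fun x => σ₀.SameCycle e x)).erase e', θ x = 0 := by
            have := Finset.add_sum_erase _ θ he'cyc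
            rw [← this, hmatched e' he'] at hsum
            linarith
          have hz := (Finset.sum_eq_zero_iff_of_nonneg (fun i _ => h0 i)).mp hrest
          have hne : e ≠ e' := by
            intro h; rw [h, he'] at he0; norm_num at he0
          rw [he0, hz e (Finset.mem_erase.mpr ⟨hne, hecyc⟩)]
        · rw [he1, hmatched e he1]
      rw [hθm]
      exact subset_convexHull ℝ _ ⟨h01, hm1, hm2⟩
    · -- tm < 1 : peel off the matching m
      set θ' : E → ℝ := fun e => (θ e - tm * m e) / (1 - tm) with hθ'
      have h1t : (0:ℝ) < 1 - tm := by linarith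
      have h0' : ∀ e, 0 ≤ θ' e := by
        intro e
        apply div_nonneg _ h1t.le
        rcases h01 e with he | he
        · rw [he]; simpa using h0 e
        · rw [he]; have := hmem_ge e he; linarith
      have hsum' : ∀ (σ : Equiv.Perm E),
          (∀ e : E, ∑ e' ∈ univ.filter (fun e' => σ.SameCycle e e'), θ e' = 1) →
          (∀ e : E, ∑ e' ∈ univ.filter (fun e' => σ.SameCycle e e'), m e' = 1) →
          ∀ e : E, ∑ e' ∈ univ.filter (fun e' => σ.SameCycle e e'), θ' e' = 1 := by
        intro σ hθs hms e
        simp only [hθ', div_eq_mul_inv]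
        rw [← Finset.sum_mul, Finset.sum_sub_distrib, hθs e, ← Finset.mul_sum, hms e]
        field_simp
      have h1' := hsum' σ₀ h1 (pm_matching_cycle_sum σ₀ m h01 hm1)
      have h2' := hsum' σ₁ h2 (pm_matching_cycle_sum σ₁ m h01 hm2)
      have hθ'estar : θ' estar = 0 := by
        simp only [hθ', hestar1, mul_one, ← hestarval]
        simp
      have hsubset : (univ.filter fun e => θ' e ≠ 0) ⊂ (univ.filter fun e => θ e ≠ 0) := by
        constructor
        · intro e he
          simp only [mem_filter, mem_univ, true_and] at he ⊢
          intro hz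
          apply he
          have hme : m e = 0 := by
            rcases h01 e with h | h
            · exact h
            · exact absurd hz (hsupp e h)
          simp only [hθ', hz, hme]
          ring
        · intro hsub
          have h1m : estar ∈ univ.filter fun e => θ e ≠ 0 := by
            simp only [mem_filter, mem_univ, true_and]
            rw [← hestarval]; exact ne_of_gt htpos
          have := hsub h1m
          simp only [mem_filter, mem_univ, true_and] at this
          exact this hθ'estar
      have hcard' : #(univ.filter fun e => θ' e ≠ 0) ≤ n := by
        have := Finset.card_lt_card hsubset
        omega
      have hθ'mem := ih θ' h0' h1' h2' hcard'
      have hmmem : m ∈ convexHull ℝ {m : E → ℝ | IsPerfectMatching σ₀ σ₁ m} :=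
        subset_convexHull ℝ _ ⟨h01, hm1, hm2⟩
      have hcomb : θ = tm • m + (1 - tm) • θ' := by
        funext e
        simp only [Pi.add_apply, Pi.smul_apply, smul_eq_mul, hθ']
        field_simp
        ring
      rw [hcomb]
      exact (convex_convexHull ℝ _) hmmem hθ'mem htpos.le (by linarith) (by ring)

end AuxPM

/-- The convex hull of the (indicator vectors of the) perfect matchings of `(E, σ₀, σ₁)`
is exactly the set of nonnegative functions `θ : E → ℝ` whose sum over every cycle of `σ₀`
and over every cycle of `σ₁` equals `1`. -/
theorem convexHull_perfectMatchings_eq_fractionalMatchings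
    [Fintype E] [DecidableEq E] (σ₀ σ₁ : Equiv.Perm E) :
    convexHull ℝ {m : E → ℝ | IsPerfectMatching σ₀ σ₁ m} =
      {θ : E → ℝ | (∀ e, 0 ≤ θ e) ∧
        (∀ e : E, ∑ e' ∈ univ.filter (fun e' => σ₀.SameCycle e e'), θ e' = 1) ∧
        (∀ e : E, ∑ e' ∈ univ.filter (fun e' => σ₁.SameCycle e e'), θ e' = 1)} := by
  apply Set.Subset.antisymm
  · apply convexHull_min
    · rintro m ⟨h01, hm1, hm2⟩
      refine ⟨?_, ?_, ?_⟩
      · intro e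
        rcases h01 e with h | h <;> rw [h] <;> norm_num
      · exact pm_matching_cycle_sum σ₀ m h01 hm1
      · exact pm_matching_cycle_sum σ₁ m h01 hm2
    · rintro θ₁ ⟨h10, h11, h12⟩ θ₂ ⟨h20, h21, h22⟩ a b ha hb hab
      refine ⟨?_, ?_, ?_⟩
      · intro e
        simp only [Pi.add_apply, Pi.smul_apply, smul_eq_mul]
        have := h10 e; have := h20 e
        positivity
      · intro e
        simp only [Pi.add_apply, Pi.smul_apply, smul_eq_mul]
        rw [Finset.sum_add_distrib, ← Finset.mul_sum, ← Finset.mul_sum, h11 e, h21 e]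
        linarith
      · intro e
        simp only [Pi.add_apply, Pi.smul_apply, smul_eq_mul]
        rw [Finset.sum_add_distrib, ← Finset.mul_sum, ← Finset.mul_sum, h12 e, h22 e]
        linarith
  · rintro θ ⟨h0, h1, h2⟩
    exact pm_mem_hull σ₀ σ₁ (#(univ.filter fun e => θ e ≠ 0)) θ h0 h1 h2 le_rfl
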